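/- Let $\mu$ be a Borel measure on a metric space $X$, let $x_0 \in X$ with $\mu(\{x_0\}) = 0$ and $0 < \mu(B(x_0,\rho)) < \infty$ for all $\rho > 0$. Suppose there exist $\eta > 0$, $C > 0$ and $R_0 > 0$ such that $\mu(B(x_0,R) \setminus B(x_0,r)) \le C (1 - r/R)^\eta \mu(B(x_0,R))$ for all $0 < r < R < R_0$. Then $\eta \le 1$. -/

import Mathlib

open MeasureTheory Metric

theorem stmt_3 {X : Type*} [MetricSpace X] [MeasurableSpace X] [BorelSpace X] (μ : Measure X) (x₀ : X)
    (hatom : μ {x₀} = 0)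
    (hball : ∀ ρ : ℝ, 0 < ρ → 0 < μ (ball x₀ ρ) ∧ μ (ball x₀ ρ) < ⊤)
    (η C R₀ : ℝ) (hη : 0 < η) (hC : 0 < C) (hR₀ : 0 < R₀)
    (hAD : ∀ r R : ℝ, 0 < r → r < R → R < R₀ →
      μ (ball x₀ R \ ball x₀ r) ≤ ENNReal.ofReal (C * (1 - r / R) ^ η) * μ (ball x₀ R)) :
    η ≤ 1 := by
  by_contra hcon
  push_neg at hcon
  set b := R₀ / 2 with hb
  have hb0 : 0 < b := by positivity
  have hbR : b < R₀ := by simp only [hb]; linarith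
  set F : ℝ → ℝ := fun t => (μ (ball x₀ t)).toReal with hF
  have hfin : ∀ t : ℝ, 0 < t → μ (ball x₀ t) ≠ ⊤ := fun t ht => (hball t ht).2.ne
  have hmono : ∀ s t : ℝ, 0 < t → s ≤ t → F s ≤ F t := by
    intro s t ht hst
    exact ENNReal.toReal_mono (hfin t ht) (measure_mono (ball_subset_ball hst))
  have hFnonneg : ∀ t : ℝ, 0 ≤ F t := fun t => ENNReal.toReal_nonneg
  have key : ∀ r R : ℝ, 0 < r → r < R → R < R₀ → F R - F r ≤ C * ((R - r)/R) ^ η * F R := by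
    intro r R hr hrR hRR
    have hR : 0 < R := hr.trans hrR
    have h1 : μ (ball x₀ R) ≤ μ (ball x₀ r) + μ (ball x₀ R \ ball x₀ r) := by
      calc μ (ball x₀ R) = μ (ball x₀ r ∪ ball x₀ R \ ball x₀ r) := by
            rw [Set.union_diff_cancel (ball_subset_ball hrR.le)]
        _ ≤ _ := measure_union_le _ _
    have h2 := hAD r R hr hrR hRR
    have heq : 1 - r / R = (R - r) / R := by field_simp
    rw [heq] at h2
    have hex : (0:ℝ) ≤ (R - r) / R := div_nonneg (by linarith) hR.le
    have hdiff_fin : μ (ball x₀ R \ ball x₀ r) ≠ ⊤ :=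
      ((measure_mono Set.diff_subset).trans_lt (hball R hR).2).ne
    have h3 : F R ≤ F r + (μ (ball x₀ R \ ball x₀ r)).toReal := by
      have h1' := ENNReal.toReal_mono (ENNReal.add_ne_top.2 ⟨hfin r hr, hdiff_fin⟩) h1
      rwa [ENNReal.toReal_add (hfin r hr) hdiff_fin] at h1'
    have h4 : (μ (ball x₀ R \ ball x₀ r)).toReal ≤ C * ((R - r)/R) ^ η * F R := by
      have h2' := ENNReal.toReal_mono
        (ENNReal.mul_ne_top ENNReal.ofReal_ne_top (hfin R hR)) h2
      rwa [ENNReal.toReal_mul,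
        ENNReal.toReal_ofReal (mul_nonneg hC.le (Real.rpow_nonneg hex η))] at h2'
    linarith
  have main : ∀ a : ℝ, 0 < a → a < b → F b ≤ F a := by
    intro a ha hab
    have hba : 0 < b - a := by linarith
    have bound : ∀ K : ℕ, 1 ≤ K →
        F b - F a ≤ (C * ((b - a)/a) ^ η * F b) * (K:ℝ) ^ (1 - η) := by
      intro K hK
      have hKpos : (0:ℝ) < K := by exact_mod_cast hK
      set Δ : ℝ := (b - a) / K with hΔ
      have hΔ0 : 0 < Δ := div_pos hba hKpos
      set t : ℕ → ℝ := fun i => a + i * Δ with ht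
      have htK : t K = b := by
        simp only [ht, hΔ]
        field_simp
        ring
      have htel : F b - F a = ∑ i ∈ Finset.range K, (F (t (i+1)) - F (t i)) := by
        rw [Finset.sum_range_sub (fun i => F (t i)), htK]
        simp [ht]
      have hti_lb : ∀ i : ℕ, a ≤ t i := by
        intro i
        simp only [ht]
        nlinarith [Nat.cast_nonneg (α := ℝ) i, hΔ0.le]
      have hti_ub : ∀ i : ℕ, i ≤ K → t i ≤ b := by
        intro i hi
        have : (i : ℝ) ≤ K := by exact_mod_cast hi
        have h2 : (i:ℝ) * Δ ≤ K * Δ := by nlinarith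
        have h3 : (K:ℝ) * Δ = b - a := by
          simp only [hΔ]; field_simp
        simp only [ht]; linarith
      have hterm : ∀ i ∈ Finset.range K,
          F (t (i+1)) - F (t i) ≤ C * ((b - a)/a) ^ η * F b * (K:ℝ) ^ (-η) := by
        intro i hi
        rw [Finset.mem_range] at hi
        have h0i : 0 < t i := lt_of_lt_of_le ha (hti_lb i)
        have hstep : t i < t (i+1) := by
          simp only [ht]
          push_cast
          nlinarith
        have hub : t (i+1) ≤ b := hti_ub (i+1) hi
        have hRR : t (i+1) < R₀ := lt_of_le_of_lt hub hbR
        have hk := key (t i) (t (i+1)) h0i hstep hRR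
        have hdiffeq : t (i+1) - t i = Δ := by
          simp only [ht]; push_cast; ring
        rw [hdiffeq] at hk
        have h0i1 : 0 < t (i+1) := h0i.trans hstep
        have hdivle : Δ / t (i+1) ≤ Δ / a := by
          exact div_le_div_of_nonneg_left hΔ0.le ha (hti_lb (i+1))
        have hrpowle : (Δ / t (i+1)) ^ η ≤ (Δ / a) ^ η :=
          Real.rpow_le_rpow (by positivity) hdivle hη.le
        have hFle : F (t (i+1)) ≤ F b := hmono _ _ hb0 hub
        have hbig : C * (Δ / t (i+1)) ^ η * F (t (i+1)) ≤ C * (Δ / a) ^ η * F b :=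
          mul_le_mul (mul_le_mul le_rfl hrpowle (Real.rpow_nonneg (by positivity) η) hC.le)
            hFle (hFnonneg _)
            (mul_nonneg hC.le (Real.rpow_nonneg (div_nonneg hΔ0.le ha.le) η))
        have hsplit : (Δ / a) ^ η = ((b - a)/a) ^ η * (K:ℝ) ^ (-η) := by
          have : Δ / a = ((b - a)/a) * (K:ℝ)⁻¹ := by
            simp only [hΔ]; ring
          rw [this, Real.mul_rpow (by positivity) (by positivity),
            Real.inv_rpow hKpos.le, Real.rpow_neg hKpos.le]
        calc F (t (i+1)) - F (t i) ≤ C * (Δ / t (i+1)) ^ η * F (t (i+1)) := hk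
          _ ≤ C * (Δ / a) ^ η * F b := hbig
          _ = C * ((b - a)/a) ^ η * F b * (K:ℝ) ^ (-η) := by rw [hsplit]; ring
      have hsum : F b - F a ≤ (K:ℝ) * (C * ((b - a)/a) ^ η * F b * (K:ℝ) ^ (-η)) := by
        rw [htel]
        calc ∑ i ∈ Finset.range K, (F (t (i+1)) - F (t i))
            ≤ ∑ _i ∈ Finset.range K, C * ((b - a)/a) ^ η * F b * (K:ℝ) ^ (-η) :=
              Finset.sum_le_sum hterm
          _ = (K:ℝ) * (C * ((b - a)/a) ^ η * F b * (K:ℝ) ^ (-η)) := by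
              rw [Finset.sum_const, Finset.card_range, nsmul_eq_mul]
      have hpow : (K:ℝ) ^ (1 - η) = (K:ℝ) * (K:ℝ) ^ (-η) := by
        rw [show (1 : ℝ) - η = 1 + (-η) by ring, Real.rpow_add hKpos, Real.rpow_one]
      rw [hpow]
      calc F b - F a ≤ (K:ℝ) * (C * ((b - a)/a) ^ η * F b * (K:ℝ) ^ (-η)) := hsum
        _ = (C * ((b - a)/a) ^ η * F b) * ((K:ℝ) * (K:ℝ) ^ (-η)) := by ring
    have hlim : Filter.Tendsto (fun K : ℕ => (C * ((b - a)/a) ^ η * F b) * (K:ℝ) ^ (1 - η))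
        Filter.atTop (nhds 0) := by
      have h1 : Filter.Tendsto (fun x : ℝ => x ^ (1 - η)) Filter.atTop (nhds 0) := by
        have := tendsto_rpow_neg_atTop (y := η - 1) (by linarith)
        simpa [show -(η - 1) = 1 - η by ring] using this
      have hn : Filter.Tendsto (fun n : ℕ => (n:ℝ)) Filter.atTop Filter.atTop :=
        tendsto_natCast_atTop_atTop
      have h2 := (h1.comp hn).const_mul (C * ((b - a)/a) ^ η * F b)
      simpa using h2
    have hle : F b - F a ≤ 0 := by
      refine ge_of_tendsto hlim ?_
      filter_upwards [Filter.eventually_ge_atTop 1] with K hK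
      exact bound K hK
    linarith
  -- now let a → 0
  have hiInter : ⋂ n : ℕ, ball x₀ (b / (n + 2)) = {x₀} := by
    ext y
    simp only [Set.mem_iInter, Metric.mem_ball, Set.mem_singleton_iff]
    constructor
    · intro h
      by_contra hy
      have hd : 0 < dist y x₀ := dist_pos.2 hy
      obtain ⟨n, hn⟩ := exists_nat_gt (b / dist y x₀)
      have h2 : b / ((n:ℝ) + 2) < dist y x₀ := by
        rw [div_lt_iff₀ (by positivity)]
        have : b / dist y x₀ < (n:ℝ) + 2 := by linarith
        calc b = (b / dist y x₀) * dist y x₀ := by field_simp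
          _ < ((n:ℝ) + 2) * dist y x₀ := by nlinarith
          _ = dist y x₀ * ((n:ℝ) + 2) := by ring
      exact absurd (h n) (not_lt.2 h2.le)
    · intro h
      subst h
      intro n
      simp only [dist_self]
      positivity
  have hmeas : Filter.Tendsto (fun n : ℕ => μ (ball x₀ (b / (n + 2)))) Filter.atTop
      (nhds (μ {x₀})) := by
    rw [← hiInter]
    apply tendsto_measure_iInter_atTop
    · exact fun n => measurableSet_ball.nullMeasurableSet
    · intro n m hnm
      apply ball_subset_ball
      apply div_le_div_of_nonneg_left hb0.le (by positivity)
      have : (n:ℝ) ≤ m := Nat.cast_le.2 hnm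
      linarith
    · exact ⟨0, hfin _ (by positivity)⟩
  have hmeas' : Filter.Tendsto (fun n : ℕ => F (b / (n + 2))) Filter.atTop (nhds 0) := by
    rw [hatom] at hmeas
    have := (ENNReal.tendsto_toReal (by simp)).comp hmeas
    simpa [hF, Function.comp_def] using this
  have hFble : ∀ n : ℕ, F b ≤ F (b / (n + 2)) := by
    intro n
    apply main
    · positivity
    · rw [div_lt_iff₀ (by positivity)]
      nlinarith
  have : F b ≤ 0 := ge_of_tendsto hmeas' (Filter.Eventually.of_forall hFble)
  have hFbpos : 0 < F b := ENNReal.toReal_pos (hball b hb0).1.ne' (hfin b hb0)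
  linarith
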